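/- Coordinate decomposition of axiomatic value operators: Let n, m be positive integers and let Φ : 𝒢ₙᵐ → (ℝᵐ)ⁿ be a value operator satisfying efficiency, symmetry, dummy, and additivity. Then there exist maps Ψ⁽ʲ⁾ : 𝒢ₙ → ℝⁿ, j = 1,…,m, such that for all v ∈ 𝒢ₙᵐ and all i ∈ {1,…,n}, Φᵢ(v) = (Ψᵢ⁽¹⁾(v⁽¹⁾), …, Ψᵢ⁽ᵐ⁾(v⁽ᵐ⁾)), where v⁽ʲ⁾ = πⱼ∘v is the j-th scalar coordinate game. Moreover, each Ψ⁽ʲ⁾ satisfies the scalar Shapley axioms of efficiency, symmetry, dummy, and additivity. -/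

import Mathlib

open Finset

/-- Efficiency axiom for a vector-valued value operator. -/
def IsEfficient (n m : ℕ) (Φ : (Finset (Fin n) → (Fin m → ℝ)) → (Fin n → Fin m → ℝ)) : Prop :=
  ∀ v : Finset (Fin n) → (Fin m → ℝ), v ∅ = 0 → ∑ i : Fin n, Φ v i = v Finset.univ

/-- Symmetry axiom. -/
def IsSymmetric (n m : ℕ) (Φ : (Finset (Fin n) → (Fin m → ℝ)) → (Fin n → Fin m → ℝ)) : Prop :=
  ∀ v : Finset (Fin n) → (Fin m → ℝ), v ∅ = 0 → ∀ i j : Fin n,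
    (∀ S : Finset (Fin n), i ∉ S → j ∉ S → v (insert i S) = v (insert j S)) →
    Φ v i = Φ v j

/-- Dummy (null player) axiom. -/
def IsDummy (n m : ℕ) (Φ : (Finset (Fin n) → (Fin m → ℝ)) → (Fin n → Fin m → ℝ)) : Prop :=
  ∀ v : Finset (Fin n) → (Fin m → ℝ), v ∅ = 0 → ∀ i : Fin n,
    (∀ S : Finset (Fin n), i ∉ S → v (insert i S) = v S) → Φ v i = 0

/-- Additivity axiom. -/
def IsAdditive (n m : ℕ) (Φ : (Finset (Fin n) → (Fin m → ℝ)) → (Fin n → Fin m → ℝ)) : Prop :=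
  ∀ v w : Finset (Fin n) → (Fin m → ℝ), v ∅ = 0 → w ∅ = 0 → ∀ α β : ℝ,
    Φ (α • v + β • w) = α • Φ v + β • Φ w

/-- Scalar efficiency axiom. -/
def IsEfficientR (n : ℕ) (Ψ : (Finset (Fin n) → ℝ) → (Fin n → ℝ)) : Prop :=
  ∀ v : Finset (Fin n) → ℝ, v ∅ = 0 → ∑ i : Fin n, Ψ v i = v Finset.univ

/-- Scalar symmetry axiom. -/
def IsSymmetricR (n : ℕ) (Ψ : (Finset (Fin n) → ℝ) → (Fin n → ℝ)) : Prop :=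
  ∀ v : Finset (Fin n) → ℝ, v ∅ = 0 → ∀ i j : Fin n,
    (∀ S : Finset (Fin n), i ∉ S → j ∉ S → v (insert i S) = v (insert j S)) →
    Ψ v i = Ψ v j

/-- Scalar dummy axiom. -/
def IsDummyR (n : ℕ) (Ψ : (Finset (Fin n) → ℝ) → (Fin n → ℝ)) : Prop :=
  ∀ v : Finset (Fin n) → ℝ, v ∅ = 0 → ∀ i : Fin n,
    (∀ S : Finset (Fin n), i ∉ S → v (insert i S) = v S) → Ψ v i = 0

/-- Scalar additivity axiom. -/
def IsAdditiveR (n : ℕ) (Ψ : (Finset (Fin n) → ℝ) → (Fin n → ℝ)) : Prop :=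
  ∀ v w : Finset (Fin n) → ℝ, v ∅ = 0 → w ∅ = 0 → ∀ α β : ℝ,
    Ψ (α • v + β • w) = α • Ψ v + β • Ψ w

private lemma mobius_aux {ι : Type*} [DecidableEq ι] {M : Type*} [AddCommGroup M] [Module ℝ M]
    (S : Finset ι) : ∀ v : Finset ι → M,
    ∑ T ∈ S.powerset, ∑ R ∈ T.powerset, ((-1:ℝ)^(T.card + R.card)) • v R = v S := by
  induction S using Finset.induction_on with
  | empty => intro v; simp
  | insert a s ha ih =>
    intro v
    rw [Finset.sum_powerset_insert ha, ih]
    have h2 : ∀ T ∈ s.powerset,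
        ∑ R ∈ (insert a T).powerset, ((-1:ℝ)^((insert a T).card + R.card)) • v R
        = ∑ R ∈ T.powerset, ((-1:ℝ)^(T.card + R.card)) • (v (insert a R) - v R) := by
      intro T hT
      have haT : a ∉ T := fun h => ha (Finset.mem_powerset.mp hT h)
      rw [Finset.sum_powerset_insert haT, Finset.card_insert_of_notMem haT]
      rw [← Finset.sum_add_distrib]
      refine Finset.sum_congr rfl fun R hR => ?_
      have haR : a ∉ R := fun h => haT (Finset.mem_powerset.mp hR h)
      rw [Finset.card_insert_of_notMem haR, smul_sub]
      have e1 : ((-1:ℝ))^(T.card + 1 + R.card) = -((-1:ℝ)^(T.card + R.card)) := by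
        rw [show T.card + 1 + R.card = (T.card + R.card) + 1 by omega, pow_succ]; ring
      have e2 : ((-1:ℝ))^(T.card + 1 + (R.card + 1)) = (-1:ℝ)^(T.card + R.card) := by
        rw [show T.card + 1 + (R.card + 1) = (T.card + R.card) + 2 by omega, pow_add]; norm_num
      rw [e1, e2, neg_smul]
      abel
    rw [Finset.sum_congr rfl h2, ih (fun R => v (insert a R) - v R)]
    abel

/-- **Coordinate decomposition of axiomatic value operators.**  If `Φ` satisfies the
four Shapley axioms on `𝒢ₙᵐ`, then there exist scalar operators `Ψ⁽ʲ⁾ : 𝒢ₙ → ℝⁿ`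
with `Φᵢ(v) = (Ψᵢ⁽¹⁾(v⁽¹⁾),…,Ψᵢ⁽ᵐ⁾(v⁽ᵐ⁾))`, each of which satisfies the scalar
Shapley axioms. -/
theorem coordinate_decomposition (n m : ℕ) (hn : 0 < n) (hm : 0 < m)
    (Φ : (Finset (Fin n) → (Fin m → ℝ)) → (Fin n → Fin m → ℝ))
    (heff : IsEfficient n m Φ) (hsym : IsSymmetric n m Φ)
    (hdum : IsDummy n m Φ) (hadd : IsAdditive n m Φ) :
    ∃ Ψ : Fin m → ((Finset (Fin n) → ℝ) → (Fin n → ℝ)),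
      (∀ v : Finset (Fin n) → (Fin m → ℝ), v ∅ = 0 →
        ∀ i : Fin n, ∀ j : Fin m, Φ v i j = Ψ j (fun S => v S j) i) ∧
      (∀ j : Fin m, IsEfficientR n (Ψ j) ∧ IsSymmetricR n (Ψ j) ∧
        IsDummyR n (Ψ j) ∧ IsAdditiveR n (Ψ j)) := by
  classical
  -- basic consequences of additivity
  have hΦ0 : Φ 0 = 0 := by
    have h := hadd 0 0 rfl rfl 1 1
    have h0 : (1:ℝ) • (0 : Finset (Fin n) → (Fin m → ℝ)) + (1:ℝ) • 0 = 0 := by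
      funext S k; simp
    rw [h0] at h
    funext i k
    have hk := congrFun (congrFun h i) k
    simp only [Pi.add_apply, Pi.smul_apply, one_smul] at hk
    simp only [Pi.zero_apply]
    linarith
  have hΦadd : ∀ v w : Finset (Fin n) → (Fin m → ℝ), v ∅ = 0 → w ∅ = 0 →
      Φ (v + w) = Φ v + Φ w := by
    intro v w hv hw
    have h := hadd v w hv hw 1 1
    simpa using h
  have hΦsum : ∀ (s : Finset (Finset (Fin n))) (f : Finset (Fin n) → (Finset (Fin n) → (Fin m → ℝ))),
      (∀ T ∈ s, f T ∅ = 0) → Φ (∑ T ∈ s, f T) = ∑ T ∈ s, Φ (f T) := by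
    intro s
    induction s using Finset.induction_on with
    | empty => intro f _; simpa using hΦ0
    | insert a s ha ih =>
      intro f hf
      rw [Finset.sum_insert ha, Finset.sum_insert ha,
        hΦadd _ _ (hf a (Finset.mem_insert_self a s)) (by
          simp only [Finset.sum_apply]
          exact Finset.sum_eq_zero fun T hT => hf T (Finset.mem_insert_of_mem hT)),
        ih f (fun T hT => hf T (Finset.mem_insert_of_mem hT))]
  -- key lemma: if the j-th coordinate game vanishes, so does the j-th coordinate of Φ
  have key : ∀ (w : Finset (Fin n) → (Fin m → ℝ)), w ∅ = 0 → ∀ j : Fin m,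
      (∀ S, w S j = 0) → ∀ i : Fin n, Φ w i j = 0 := by
    intro w hw0 j hwj i
    set c : Finset (Fin n) → (Fin m → ℝ) :=
      fun T => ∑ R ∈ T.powerset, ((-1:ℝ)^(T.card + R.card)) • w R with hc
    set g : Finset (Fin n) → (Finset (Fin n) → (Fin m → ℝ)) :=
      fun T S => if T ⊆ S then c T else 0 with hgdef
    have hcj : ∀ T, c T j = 0 := by
      intro T
      simp only [hc, Finset.sum_apply, Pi.smul_apply, smul_eq_mul]
      exact Finset.sum_eq_zero fun R _ => by rw [hwj R, mul_zero]
    have hg0 : ∀ T, g T ∅ = 0 := by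
      intro T
      simp only [hgdef]
      by_cases h : T ⊆ (∅ : Finset (Fin n))
      · have hT : T = ∅ := Finset.subset_empty.mp h
        subst hT
        simp [hc, hw0]
      · simp [h]
    have hdecomp : w = ∑ T ∈ (Finset.univ : Finset (Fin n)).powerset, g T := by
      funext S
      rw [Finset.sum_apply]
      have h1 : ∑ T ∈ (Finset.univ : Finset (Fin n)).powerset, g T S
          = ∑ T ∈ S.powerset, g T S := by
        refine (Finset.sum_subset (fun T hT => by
          simp [Finset.mem_powerset]) ?_).symm
        intro T _ hTS
        have : ¬ T ⊆ S := fun h => hTS (Finset.mem_powerset.mpr h)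
        simp [hgdef, this]
      rw [h1]
      have h2 : ∑ T ∈ S.powerset, g T S = ∑ T ∈ S.powerset, c T :=
        Finset.sum_congr rfl fun T hT => by
          simp [hgdef, Finset.mem_powerset.mp hT]
      rw [h2, hc]
      exact (mobius_aux S w).symm
    have hterm : ∀ T ∈ (Finset.univ : Finset (Fin n)).powerset, Φ (g T) i j = 0 := by
      intro T _
      by_cases hiT : i ∈ T
      · -- symmetry among members of T, efficiency
        have hsymT : ∀ i' ∈ T, Φ (g T) i' = Φ (g T) i := by
          intro i' hi'
          by_cases hii : i' = i
          · rw [hii]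
          · refine hsym (g T) (hg0 T) i' i ?_
            intro S hi'S hiS
            have h1 : ¬ T ⊆ insert i' S := fun h => by
              rcases Finset.mem_insert.mp (h hiT) with h' | h'
              · exact hii h'.symm
              · exact hiS h'
            have h2 : ¬ T ⊆ insert i S := fun h => by
              rcases Finset.mem_insert.mp (h hi') with h' | h'
              · exact hii h'
              · exact hi'S h'
            simp [hgdef, h1, h2]
        have hdumT : ∀ i' : Fin n, i' ∉ T → Φ (g T) i' = 0 := by
          intro i' hi'
          refine hdum (g T) (hg0 T) i' ?_
          intro S _
          have : T ⊆ insert i' S ↔ T ⊆ S := by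
            constructor
            · intro h x hx
              rcases Finset.mem_insert.mp (h hx) with h' | h'
              · exact absurd (h' ▸ hx) hi'
              · exact h'
            · intro h; exact h.trans (Finset.subset_insert _ _)
          simp only [hgdef]
          rw [if_congr this rfl rfl]
        have heffT := heff (g T) (hg0 T)
        have hgu : g T Finset.univ = c T := by
          simp [hgdef, Finset.subset_univ]
        rw [hgu] at heffT
        have hsplit : ∑ i' : Fin n, Φ (g T) i' = ∑ i' ∈ T, Φ (g T) i' := by
          refine (Finset.sum_subset (Finset.subset_univ T) ?_).symm
          intro i' _ hi'
          exact hdumT i' hi'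
        have hTsum : ∑ i' ∈ T, Φ (g T) i' = T.card • Φ (g T) i := by
          rw [Finset.sum_congr rfl hsymT, Finset.sum_const]
        have hfinal : T.card • Φ (g T) i = c T := by
          rw [← hTsum, ← hsplit, heffT]
        have hj := congrFun hfinal j
        rw [hcj T] at hj
        have hj' : (T.card : ℝ) * Φ (g T) i j = 0 := by
          simpa [nsmul_eq_mul] using hj
        have hcard : (0:ℝ) < T.card := by
          have : 0 < T.card := Finset.card_pos.mpr ⟨i, hiT⟩
          exact_mod_cast this
        have := mul_eq_zero.mp hj'
        rcases this with h | h
        · exact absurd h (ne_of_gt hcard)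
        · exact h
      · -- dummy player
        have : Φ (g T) i = 0 := by
          refine hdum (g T) (hg0 T) i ?_
          intro S _
          have : T ⊆ insert i S ↔ T ⊆ S := by
            constructor
            · intro h x hx
              rcases Finset.mem_insert.mp (h hx) with h' | h'
              · exact absurd (h' ▸ hx) hiT
              · exact h'
            · intro h; exact h.trans (Finset.subset_insert _ _)
          simp only [hgdef]
          rw [if_congr this rfl rfl]
        rw [this]; rfl
    calc Φ w i j = Φ (∑ T ∈ (Finset.univ : Finset (Fin n)).powerset, g T) i j := by
          rw [← hdecomp]
      _ = (∑ T ∈ (Finset.univ : Finset (Fin n)).powerset, Φ (g T)) i j := by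
          rw [hΦsum _ _ (fun T _ => hg0 T)]
      _ = ∑ T ∈ (Finset.univ : Finset (Fin n)).powerset, Φ (g T) i j := by
          simp [Finset.sum_apply]
      _ = 0 := Finset.sum_eq_zero hterm
  -- the embedding of a scalar game into coordinate j
  set emb : Fin m → (Finset (Fin n) → ℝ) → (Finset (Fin n) → (Fin m → ℝ)) :=
    fun j w S k => if k = j then w S else 0 with hembdef
  have hemb0 : ∀ (j : Fin m) (w : Finset (Fin n) → ℝ), w ∅ = 0 → emb j w ∅ = 0 := by
    intro j w hw
    funext k
    simp [hembdef, hw]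
  refine ⟨fun j w i => Φ (emb j w) i j, ?_, ?_⟩
  · -- decomposition
    intro v hv i j
    set w : Finset (Fin n) → ℝ := fun S => v S j with hwdef
    have hw0 : w ∅ = 0 := by simp [hwdef, hv]
    set r : Finset (Fin n) → (Fin m → ℝ) := v - emb j w with hrdef
    have hr0 : r ∅ = 0 := by
      funext k
      simp only [hrdef, Pi.sub_apply]
      rw [hemb0 j w hw0, hv]
      simp
    have hrj : ∀ S, r S j = 0 := by
      intro S
      simp [hrdef, hembdef, hwdef]
    have hv' : v = emb j w + r := by
      funext S k; simp [hrdef]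
    have := hΦadd (emb j w) r (hemb0 j w hw0) hr0
    rw [hv', this]
    have hkey := key r hr0 j hrj i
    simp [hkey]
  · -- scalar axioms
    intro j
    refine ⟨?_, ?_, ?_, ?_⟩
    · -- efficiency
      intro w hw
      have h := heff (emb j w) (hemb0 j w hw)
      have := congrFun h j
      rw [Finset.sum_apply] at this
      simpa [hembdef] using this
    · -- symmetry
      intro w hw i i' hsy
      have h := hsym (emb j w) (hemb0 j w hw) i i' ?_
      · exact congrFun h j
      · intro S hiS hi'S
        funext k
        by_cases hk : k = j
        · simp [hembdef, hk, hsy S hiS hi'S]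
        · simp [hembdef, hk]
    · -- dummy
      intro w hw i hdm
      have h := hdum (emb j w) (hemb0 j w hw) i ?_
      · exact congrFun h j
      · intro S hiS
        funext k
        by_cases hk : k = j
        · simp [hembdef, hk, hdm S hiS]
        · simp [hembdef, hk]
    · -- additivity
      intro v w hv hw α β
      have hlin : emb j (α • v + β • w) = α • emb j v + β • emb j w := by
        funext S k
        by_cases hk : k = j
        · simp [hembdef, hk]
        · simp [hembdef, hk]
      funext i
      have h := hadd (emb j v) (emb j w) (hemb0 j v hv) (hemb0 j w hw) α β
      simp only [hlin, h, Pi.add_apply, Pi.smul_apply, smul_eq_mul]
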